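/- Let n and M be natural numbers, R ≥ 0, ε ≥ 0 and 0 ≤ γ < 1 real numbers, g* ∈ ℝⁿ, and let s, s' : ℕ → ℝⁿ be two sequences such that ‖s(i+1) − s(i)‖ ≤ R and ‖s'(i+1) − s'(i)‖ ≤ R for all i < 2M, with ‖s(0) − s'(0)‖ ≤ ε and ‖s(2M) − s'(2M)‖ ≤ ε. Then |Σ_{i=0}^{2M} γ^i·(‖g* − s(i)‖ − ‖g* − s'(i)‖)| ≤ (Σ_{i=0}^{M} γ^i·i + Σ_{i=M}^{2M} γ^i·(2M − i))·2R + ((1 − γ^{2M+1})/(1 − γ))·ε. -/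

import Mathlib

theorem suboptimality_bound_split_sum
    (n M : ℕ) (R ε γ : ℝ) (hR : 0 ≤ R) (hε : 0 ≤ ε)
    (hγ0 : 0 ≤ γ) (hγ1 : γ < 1)
    (gstar : EuclideanSpace ℝ (Fin n))
    (s s' : ℕ → EuclideanSpace ℝ (Fin n))
    (hs : ∀ i < 2 * M, ‖s (i + 1) - s i‖ ≤ R)
    (hs' : ∀ i < 2 * M, ‖s' (i + 1) - s' i‖ ≤ R)
    (h0 : ‖s 0 - s' 0‖ ≤ ε)
    (hN : ‖s (2 * M) - s' (2 * M)‖ ≤ ε) :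
    |∑ i ∈ Finset.range (2 * M + 1), γ ^ i * (‖gstar - s i‖ - ‖gstar - s' i‖)| ≤
      (∑ i ∈ Finset.range (M + 1), γ ^ i * (i : ℝ) +
        ∑ i ∈ Finset.Icc M (2 * M), γ ^ i * ((2 * M - i : ℕ) : ℝ)) * (2 * R) +
        ((1 - γ ^ (2 * M + 1)) / (1 - γ)) * ε := by
  -- forward bound
  have keyA : ∀ i, i ≤ 2 * M → ‖s i - s' i‖ ≤ ε + 2 * R * i := by
    intro i
    induction i with
    | zero => intro _; simpa using h0
    | succ k ih =>
      intro hk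
      have hk' : k < 2 * M := by omega
      have h1 := hs k hk'
      have h2 := hs' k hk'
      have h3 := ih (by omega)
      have hd : s (k+1) - s' (k+1) =
          (s (k+1) - s k) + (s k - s' k) + (s' k - s' (k+1)) := by abel
      have h4 : ‖s (k+1) - s' (k+1)‖ ≤
          ‖s (k+1) - s k‖ + ‖s k - s' k‖ + ‖s' k - s' (k+1)‖ := by
        rw [hd]; exact norm_add₃_le
      have h5 : ‖s' k - s' (k+1)‖ = ‖s' (k+1) - s' k‖ := norm_sub_rev _ _
      push_cast
      rw [h5] at h4
      linarith
  -- backward bound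
  have keyBaux : ∀ j, j ≤ 2 * M →
      ‖s (2 * M - j) - s' (2 * M - j)‖ ≤ ε + 2 * R * j := by
    intro j
    induction j with
    | zero => intro _; simpa using hN
    | succ k ih =>
      intro hk
      set m := 2 * M - (k + 1) with hm
      have hm1 : m < 2 * M := by omega
      have hm2 : m + 1 = 2 * M - k := by omega
      have h1 := hs m hm1
      have h2 := hs' m hm1
      have h3 := ih (by omega)
      rw [← hm2] at h3
      have hd : s m - s' m =
          (s m - s (m+1)) + (s (m+1) - s' (m+1)) + (s' (m+1) - s' m) := by abel
      have h4 : ‖s m - s' m‖ ≤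
          ‖s m - s (m+1)‖ + ‖s (m+1) - s' (m+1)‖ + ‖s' (m+1) - s' m‖ := by
        rw [hd]; exact norm_add₃_le
      have h5 : ‖s m - s (m+1)‖ = ‖s (m+1) - s m‖ := norm_sub_rev _ _
      rw [h5] at h4
      push_cast
      linarith
  have keyB : ∀ i, i ≤ 2 * M →
      ‖s i - s' i‖ ≤ ε + 2 * R * ((2 * M - i : ℕ) : ℝ) := by
    intro i hi
    have := keyBaux (2 * M - i) (by omega)
    have h2 : 2 * M - (2 * M - i) = i := by omega
    rwa [h2] at this
  -- pointwise bound on summand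
  have hpt : ∀ i, |γ ^ i * (‖gstar - s i‖ - ‖gstar - s' i‖)| ≤
      γ ^ i * ‖s i - s' i‖ := by
    intro i
    rw [abs_mul, abs_pow, abs_of_nonneg hγ0]
    have h1 := abs_norm_sub_norm_le (gstar - s i) (gstar - s' i)
    have h2 : (gstar - s i) - (gstar - s' i) = s' i - s i := by abel
    rw [h2, norm_sub_rev (s' i) (s i)] at h1
    exact mul_le_mul_of_nonneg_left h1 (pow_nonneg hγ0 i)
  have step1 : |∑ i ∈ Finset.range (2 * M + 1),
      γ ^ i * (‖gstar - s i‖ - ‖gstar - s' i‖)| ≤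
      ∑ i ∈ Finset.range (2 * M + 1), γ ^ i * ‖s i - s' i‖ :=
    (Finset.abs_sum_le_sum_abs _ _).trans
      (Finset.sum_le_sum fun i _ => hpt i)
  -- split the sum
  have hsplit : ∑ i ∈ Finset.range (2 * M + 1), γ ^ i * ‖s i - s' i‖ =
      ∑ i ∈ Finset.range (M + 1), γ ^ i * ‖s i - s' i‖ +
      ∑ i ∈ Finset.Ico (M + 1) (2 * M + 1), γ ^ i * ‖s i - s' i‖ := by
    rw [Finset.range_eq_Ico, Finset.range_eq_Ico]
    exact (Finset.sum_Ico_consecutive (fun i => γ ^ i * ‖s i - s' i‖) (Nat.zero_le (M+1)) (by omega : M + 1 ≤ 2 * M + 1)).symm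
  have S1 : ∑ i ∈ Finset.range (M + 1), γ ^ i * ‖s i - s' i‖ ≤
      ∑ i ∈ Finset.range (M + 1), γ ^ i * (ε + 2 * R * i) := by
    refine Finset.sum_le_sum fun i hi => ?_
    have hi' : i ≤ 2 * M := by
      have := Finset.mem_range.mp hi; omega
    exact mul_le_mul_of_nonneg_left (keyA i hi') (pow_nonneg hγ0 i)
  have S2 : ∑ i ∈ Finset.Ico (M + 1) (2 * M + 1), γ ^ i * ‖s i - s' i‖ ≤
      ∑ i ∈ Finset.Ico (M + 1) (2 * M + 1),
        γ ^ i * (ε + 2 * R * ((2 * M - i : ℕ) : ℝ)) := by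
    refine Finset.sum_le_sum fun i hi => ?_
    have hi' : i ≤ 2 * M := by
      have := Finset.mem_Ico.mp hi; omega
    exact mul_le_mul_of_nonneg_left (keyB i hi') (pow_nonneg hγ0 i)
  -- expand the two bounding sums
  have E1 : ∑ i ∈ Finset.range (M + 1), γ ^ i * (ε + 2 * R * i) =
      ∑ i ∈ Finset.range (M + 1), γ ^ i * ε +
      (∑ i ∈ Finset.range (M + 1), γ ^ i * (i : ℝ)) * (2 * R) := by
    rw [Finset.sum_mul, ← Finset.sum_add_distrib]
    exact Finset.sum_congr rfl fun i _ => by ring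
  have E2 : ∑ i ∈ Finset.Ico (M + 1) (2 * M + 1),
        γ ^ i * (ε + 2 * R * ((2 * M - i : ℕ) : ℝ)) =
      ∑ i ∈ Finset.Ico (M + 1) (2 * M + 1), γ ^ i * ε +
      (∑ i ∈ Finset.Ico (M + 1) (2 * M + 1),
        γ ^ i * ((2 * M - i : ℕ) : ℝ)) * (2 * R) := by
    rw [Finset.sum_mul, ← Finset.sum_add_distrib]
    exact Finset.sum_congr rfl fun i _ => by ring
  -- ε part is exactly the geometric sum
  have Eε : ∑ i ∈ Finset.range (M + 1), γ ^ i * ε +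
      ∑ i ∈ Finset.Ico (M + 1) (2 * M + 1), γ ^ i * ε =
      ((1 - γ ^ (2 * M + 1)) / (1 - γ)) * ε := by
    rw [Finset.range_eq_Ico,
      Finset.sum_Ico_consecutive _ (Nat.zero_le (M+1)) (by omega),
      ← Finset.range_eq_Ico, ← Finset.sum_mul, geom_sum_eq (ne_of_lt hγ1)]
    congr 1
    rw [show (1 - γ ^ (2*M+1)) = -(γ ^ (2*M+1) - 1) by ring,
      show (1 - γ) = -(γ - 1) by ring, neg_div_neg_eq]
  -- second coefficient sum: Ico ⊆ Icc
  have Esub : ∑ i ∈ Finset.Ico (M + 1) (2 * M + 1),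
        γ ^ i * ((2 * M - i : ℕ) : ℝ) ≤
      ∑ i ∈ Finset.Icc M (2 * M), γ ^ i * ((2 * M - i : ℕ) : ℝ) := by
    refine Finset.sum_le_sum_of_subset_of_nonneg ?_ fun i _ _ => ?_
    · intro i hi
      have := Finset.mem_Ico.mp hi
      exact Finset.mem_Icc.mpr ⟨by omega, by omega⟩
    · positivity
  have hcoef : (∑ i ∈ Finset.Ico (M + 1) (2 * M + 1),
        γ ^ i * ((2 * M - i : ℕ) : ℝ)) * (2 * R) ≤
      (∑ i ∈ Finset.Icc M (2 * M), γ ^ i * ((2 * M - i : ℕ) : ℝ)) * (2 * R) :=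
    mul_le_mul_of_nonneg_right Esub (by positivity)
  calc |∑ i ∈ Finset.range (2 * M + 1), γ ^ i * (‖gstar - s i‖ - ‖gstar - s' i‖)|
      ≤ ∑ i ∈ Finset.range (2 * M + 1), γ ^ i * ‖s i - s' i‖ := step1
    _ ≤ ∑ i ∈ Finset.range (M + 1), γ ^ i * (ε + 2 * R * i) +
        ∑ i ∈ Finset.Ico (M + 1) (2 * M + 1),
          γ ^ i * (ε + 2 * R * ((2 * M - i : ℕ) : ℝ)) := by
        rw [hsplit]; exact add_le_add S1 S2
    _ ≤ (∑ i ∈ Finset.range (M + 1), γ ^ i * (i : ℝ) +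
          ∑ i ∈ Finset.Icc M (2 * M), γ ^ i * ((2 * M - i : ℕ) : ℝ)) * (2 * R) +
        ((1 - γ ^ (2 * M + 1)) / (1 - γ)) * ε := by
        rw [E1, E2, ← Eε]
        have := hcoef
        ring_nf
        ring_nf at this
        linarith
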